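/- Let G be a finitely generated group and H a finitely generated normal subgroup of G. Let T be a continuous action of G on a compact metric space X. If the restriction of T to H is expansive and has the pseudo-orbit tracing property, then T has the pseudo-orbit tracing property. -/

import Mathlib

/-- A continuous action of a group `G` on a topological space `X`. -/
def IsContAction {G X : Type*} [Group G] [TopologicalSpace X] (T : G → X → X) : Prop :=
  (∀ g, Continuous (T g)) ∧ (∀ x, T 1 x = x) ∧ ∀ g h x, T (g * h) x = T g (T h x)

/-- `{x_g}` is a `δ` pseudo-orbit of `T` with respect to the generating set `A`. -/
def IsPseudoOrbit {G X : Type*} [Group G] [MetricSpace X] (T : G → X → X) (A : Set G)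
    (δ : ℝ) (x : G → X) : Prop :=
  ∀ a ∈ A, ∀ g : G, dist (T a (x g)) (x (a * g)) < δ

/-- The point `y` `ε`-traces the pseudo-orbit `{x_g}`. -/
def Traces {G X : Type*} [Group G] [MetricSpace X] (T : G → X → X) (ε : ℝ)
    (x : G → X) (y : X) : Prop :=
  ∀ g : G, dist (T g y) (x g) < ε

/-- `T` has the pseudo-orbit tracing property with respect to the generating set `A`. -/
def POTPWrt {G X : Type*} [Group G] [MetricSpace X] (T : G → X → X) (A : Set G) : Prop :=
  ∀ ε > (0 : ℝ), ∃ δ > (0 : ℝ), ∀ x : G → X, IsPseudoOrbit T A δ x → ∃ y : X, Traces T ε x y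

/-- `T` is `A`-topologically stable. -/
def TopStableWrt {G X : Type*} [Group G] [MetricSpace X] (T : G → X → X) (A : Set G) : Prop :=
  ∀ ε > (0 : ℝ), ∃ δ > (0 : ℝ), ∀ S : G → X → X, IsContAction S →
    (∀ a ∈ A, ∀ x : X, dist (T a x) (S a x) < δ) →
    ∃ f : X → X, Continuous f ∧ (∀ g x, T g (f x) = f (S g x)) ∧ ∀ x, dist (f x) x ≤ ε

/-- `T` is expansive with expansive constant `c`. -/
def ExpansiveWith {G X : Type*} [Group G] [MetricSpace X] (T : G → X → X) (c : ℝ) : Prop :=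
  0 < c ∧ ∀ x y : X, x ≠ y → ∃ g : G, dist (T g x) (T g y) > c

lemma exists_pos_forall_finset {α : Type*} (s : Finset α) (f : α → ℝ → Prop)
    (hmono : ∀ a, ∀ δ δ' : ℝ, δ ≤ δ' → f a δ' → f a δ)
    (h : ∀ a ∈ s, ∃ δ > (0:ℝ), f a δ) :
    ∃ δ > (0:ℝ), ∀ a ∈ s, f a δ := by
  classical
  induction s using Finset.induction_on with
  | empty => exact ⟨1, one_pos, by simp⟩
  | insert a s ha ih =>
    obtain ⟨δ₁, hδ₁, hf₁⟩ := h a (Finset.mem_insert_self a s)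
    obtain ⟨δ₂, hδ₂, hf₂⟩ := ih (fun b hb => h b (Finset.mem_insert_of_mem hb))
    refine ⟨min δ₁ δ₂, lt_min hδ₁ hδ₂, ?_⟩
    intro b hb
    rcases Finset.mem_insert.mp hb with rfl | hb
    · exact hmono _ _ _ (min_le_left _ _) hf₁
    · exact hmono _ _ _ (min_le_right _ _) (hf₂ b hb)

lemma propagate {G X : Type*} [Group G] [MetricSpace X] [CompactSpace X]
    (T : G → X → X) (hT : IsContAction T)
    (A : Finset G) (hAgen : Subgroup.closure (A : Set G) = ⊤) (g : G) :
    ∀ η > (0:ℝ), ∃ δ > (0:ℝ), ∀ x : G → X, IsPseudoOrbit T (A : Set G) δ x →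
      ∀ k : G, dist (T g (x k)) (x (g * k)) < η := by
  have hUC : ∀ g : G, ∀ η > (0:ℝ), ∃ γ > (0:ℝ),
      ∀ u v : X, dist u v < γ → dist (T g u) (T g v) < η := by
    intro g η hη
    obtain ⟨γ, hγ, hg⟩ := Metric.uniformContinuous_iff.mp
      (CompactSpace.uniformContinuous_of_continuous (hT.1 g)) η hη
    exact ⟨γ, hγ, fun u v h => hg h⟩
  have hg : g ∈ Subgroup.closure (A : Set G) := hAgen ▸ Subgroup.mem_top g
  induction hg using Subgroup.closure_induction with
  | mem a ha =>
    intro η hη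
    exact ⟨η, hη, fun x hx k => hx a ha k⟩
  | one =>
    intro η hη
    refine ⟨1, one_pos, fun x hx k => ?_⟩
    simp [hT.2.1, hη]
  | mul g₁ g₂ hg₁ hg₂ ih₁ ih₂ =>
    intro η hη
    obtain ⟨γ, hγ, hγ'⟩ := hUC g₁ (η/2) (by linarith)
    obtain ⟨δ₂, hδ₂, h₂⟩ := ih₂ γ hγ
    obtain ⟨δ₁, hδ₁, h₁⟩ := ih₁ (η/2) (by linarith)
    refine ⟨min δ₁ δ₂, lt_min hδ₁ hδ₂, fun x hx k => ?_⟩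
    have hx₁ : IsPseudoOrbit T (A : Set G) δ₁ x :=
      fun a ha k => (hx a ha k).trans_le (min_le_left _ _)
    have hx₂ : IsPseudoOrbit T (A : Set G) δ₂ x :=
      fun a ha k => (hx a ha k).trans_le (min_le_right _ _)
    have e1 : dist (T g₁ (T g₂ (x k))) (T g₁ (x (g₂ * k))) < η/2 :=
      hγ' _ _ (h₂ x hx₂ k)
    have e2 : dist (T g₁ (x (g₂ * k))) (x (g₁ * (g₂ * k))) < η/2 := h₁ x hx₁ (g₂ * k)
    calc dist (T (g₁ * g₂) (x k)) (x (g₁ * g₂ * k))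
        = dist (T g₁ (T g₂ (x k))) (x (g₁ * (g₂ * k))) := by rw [hT.2.2, mul_assoc]
      _ ≤ _ + _ := dist_triangle _ (T g₁ (x (g₂ * k))) _
      _ < η/2 + η/2 := add_lt_add e1 e2
      _ = η := by ring
  | inv g hg ih =>
    intro η hη
    obtain ⟨γ, hγ, hγ'⟩ := hUC g⁻¹ η hη
    obtain ⟨δ, hδ, hd⟩ := ih γ hγ
    refine ⟨δ, hδ, fun x hx k => ?_⟩
    have h1 : dist (T g (x (g⁻¹ * k))) (x k) < γ := by
      have := hd x hx (g⁻¹ * k)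
      simpa using this
    have h2 : dist (T g⁻¹ (T g (x (g⁻¹ * k)))) (T g⁻¹ (x k)) < η := hγ' _ _ h1
    have h3 : T g⁻¹ (T g (x (g⁻¹ * k))) = x (g⁻¹ * k) := by
      rw [← hT.2.2]; simp [hT.2.1]
    rw [h3] at h2
    rw [dist_comm]
    exact h2

/-- If the restriction of `T` to a finitely generated normal subgroup `H` is expansive and
has POTP, then `T` has POTP. -/
theorem potp_of_normal_subgroup_expansive_potp
    {G X : Type*} [Group G] [MetricSpace X] [CompactSpace X]
    (H : Subgroup G) (hN : H.Normal)
    (A : Finset G) (hAgen : Subgroup.closure (A : Set G) = ⊤)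
    (B : Finset H) (hBgen : Subgroup.closure (B : Set H) = ⊤)
    (T : G → X → X) (hT : IsContAction T)
    (c : ℝ) (hexp : ExpansiveWith (fun (h : H) (x : X) => T (h : G) x) c)
    (hpotp : POTPWrt (fun (h : H) (x : X) => T (h : G) x) (B : Set H)) :
    POTPWrt T (A : Set G) := by
  classical
  obtain ⟨hc, hexp2⟩ := hexp
  intro ε hε
  -- uniform continuity moduli for a ∈ A at c/3
  have hUC : ∀ g : G, ∀ η > (0:ℝ), ∃ γ > (0:ℝ),
      ∀ u v : X, dist u v < γ → dist (T g u) (T g v) < η := by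
    intro g η hη
    obtain ⟨γ, hγ, hg⟩ := Metric.uniformContinuous_iff.mp
      (CompactSpace.uniformContinuous_of_continuous (hT.1 g)) η hη
    exact ⟨γ, hγ, fun u v h => hg h⟩
  obtain ⟨γ, hγ, hγA⟩ := exists_pos_forall_finset A
    (fun a γ => ∀ u v : X, dist u v < γ → dist (T a u) (T a v) < c/3)
    (fun a δ δ' hle h u v hd => h u v (hd.trans_le hle))
    (fun a _ => hUC a (c/3) (by linarith))
  -- the H-tracing precision
  set e : ℝ := min ε (min (c/3) γ) with he_def
  have he : 0 < e := lt_min hε (lt_min (by linarith) hγ)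
  have heε : e ≤ ε := min_le_left _ _
  have hec : e ≤ c/3 := (min_le_right _ _).trans (min_le_left _ _)
  have heγ : e ≤ γ := (min_le_right _ _).trans (min_le_right _ _)
  obtain ⟨δH, hδH, htrace⟩ := hpotp e he
  -- common propagation δ over B
  obtain ⟨δ₁, hδ₁, hB⟩ := exists_pos_forall_finset B
    (fun b δ => ∀ x : G → X, IsPseudoOrbit T (A : Set G) δ x →
      ∀ k : G, dist (T (b : G) (x k)) (x ((b : G) * k)) < δH)
    (fun b δ δ' hle h x hx k => h x (fun a ha k => (hx a ha k).trans_le hle) k)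
    (fun b _ => propagate T hT A hAgen (b : G) δH hδH)
  refine ⟨min δ₁ (c/3), lt_min hδ₁ (by linarith), ?_⟩
  intro x hx
  have hx₁ : IsPseudoOrbit T (A : Set G) δ₁ x :=
    fun a ha k => (hx a ha k).trans_le (min_le_left _ _)
  have hxc : ∀ a ∈ (A : Set G), ∀ k : G, dist (T a (x k)) (x (a * k)) < c/3 :=
    fun a ha k => (hx a ha k).trans_le (min_le_right _ _)
  -- tracing point for each coset
  have key : ∀ g : G, ∃ y : X, ∀ h : H, dist (T (h : G) y) (x ((h : G) * g)) < e := by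
    intro g
    have hz : IsPseudoOrbit (fun (h : H) (x : X) => T (h : G) x) (B : Set H) δH
        (fun h : H => x ((h : G) * g)) := by
      intro b hb h
      have := hB b hb x hx₁ ((h : G) * g)
      simpa [mul_assoc] using this
    obtain ⟨y, hy⟩ := htrace _ hz
    exact ⟨y, hy⟩
  choose y hy using key
  -- step along generators
  have step : ∀ a ∈ (A : Set G), ∀ g : G, T a (y g) = y (a * g) := by
    intro a ha g
    by_contra hne
    obtain ⟨h, hdh⟩ := hexp2 _ _ hne
    set h' : H := ⟨a⁻¹ * (h : G) * a, by simpa using hN.conj_mem _ h.2 a⁻¹⟩ with h'_def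
    have e1 : T (h : G) (T a (y g)) = T a (T (h' : G) (y g)) := by
      rw [← hT.2.2, ← hT.2.2]
      congr 1
      simp [h'_def]
      group
    have e2 : dist (T a (T (h' : G) (y g))) (T a (x ((h' : G) * g))) < c/3 :=
      hγA a ha _ _ ((hy g h').trans_le heγ)
    have e3 : dist (T a (x ((h' : G) * g))) (x ((h : G) * (a * g))) < c/3 := by
      have h4 := hxc a ha ((h' : G) * g)
      have h5 : a * ((h' : G) * g) = (h : G) * (a * g) := by
        simp [h'_def]
        group
      rwa [h5] at h4
    have e4 : dist (T (h : G) (y (a * g))) (x ((h : G) * (a * g))) < c/3 :=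
      (hy (a * g) h).trans_le hec
    have : dist (T (h : G) (T a (y g))) (T (h : G) (y (a * g))) < c := by
      calc dist (T (h : G) (T a (y g))) (T (h : G) (y (a * g)))
          ≤ dist (T (h : G) (T a (y g))) (x ((h : G) * (a * g)))
            + dist (x ((h : G) * (a * g))) (T (h : G) (y (a * g))) := dist_triangle _ _ _
        _ ≤ dist (T a (T (h' : G) (y g))) (T a (x ((h' : G) * g)))
            + dist (T a (x ((h' : G) * g))) (x ((h : G) * (a * g)))
            + dist (x ((h : G) * (a * g))) (T (h : G) (y (a * g))) := by
            rw [e1]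
            gcongr
            exact dist_triangle _ _ _
        _ < c/3 + c/3 + c/3 := by
            rw [dist_comm (x ((h : G) * (a * g)))]
            exact add_lt_add (add_lt_add e2 e3) e4
        _ = c := by ring
    exact absurd hdh (not_lt.mpr this.le)
  -- extend along the whole group
  have all : ∀ g k : G, T g (y k) = y (g * k) := by
    intro g
    have hg : g ∈ Subgroup.closure (A : Set G) := hAgen ▸ Subgroup.mem_top g
    induction hg using Subgroup.closure_induction with
    | mem a ha => exact step a ha
    | one => intro k; simp [hT.2.1]
    | mul g₁ g₂ hg₁ hg₂ ih₁ ih₂ =>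
      intro k
      rw [hT.2.2, ih₂, ih₁, mul_assoc]
    | inv g hg ih =>
      intro k
      have h1 := ih (g⁻¹ * k)
      have h2 : g * (g⁻¹ * k) = k := by group
      rw [h2] at h1
      calc T g⁻¹ (y k) = T g⁻¹ (T g (y (g⁻¹ * k))) := by rw [h1]
        _ = y (g⁻¹ * k) := by rw [← hT.2.2]; simp [hT.2.1]
  refine ⟨y 1, fun g => ?_⟩
  have h1 : T g (y 1) = y g := by simpa using all g 1
  have h2 := hy g 1
  rw [h1]
  have h3 : dist (y g) (x g) < e := by simpa [hT.2.1] using h2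
  exact h3.trans_le heε
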